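/- Let n ≥ 2, a > 0, and α = (α_1,…,α_n) ∈ (0,∞)^n with a α_k < 1 for all k; set β_k := (1 − a α_k)/α_k. Let μ ∈ ℝ^n and let Σ ∈ ℝ^{n×n} be a symmetric positive definite matrix. Define Ψ(θ) = −a Log(1 − i⟨α⋄μ, θ⟩ + ½‖θ‖²_{α⋄Σ}) − Σ_{k=1}^n β_k Log(1 − i α_k μ_k θ_k + ½ α_k θ_k² Σ_{kk}) for θ ∈ ℝ^n. Let t > 0. If (a/n + min_{1≤k≤n} β_k) · t > 1/2, then the function θ ↦ exp(t Ψ(θ)) is Lebesgue integrable on ℝ^n. -/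

import Mathlib

open MeasureTheory Complex

noncomputable section

/-- Euclidean inner product on `ℝ^n`. -/
def dot {n : ℕ} (x y : Fin n → ℝ) : ℝ := ∑ k, x k * y k

/-- Quadratic form `‖θ‖²_A = θ A θᵀ`. -/
def quad {n : ℕ} (A : Matrix (Fin n) (Fin n) ℝ) (θ : Fin n → ℝ) : ℝ :=
  ∑ k, ∑ l, θ k * A k l * θ l

/-- Outer product `t ⋄ μ` of vectors, `(t ⋄ μ)_k = t_k μ_k`. -/
def diaV {n : ℕ} (t μ : Fin n → ℝ) : Fin n → ℝ := fun k => t k * μ k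

/-- Outer product `t ⋄ Σ`, `(t ⋄ Σ)_{kl} = Σ_{kl} min(t_k, t_l)`. -/
def diaM {n : ℕ} (t : Fin n → ℝ) (A : Matrix (Fin n) (Fin n) ℝ) :
    Matrix (Fin n) (Fin n) ℝ := Matrix.of fun k l => A k l * min (t k) (t l)

/-- Lévy exponent of the weak variance-alpha-gamma process `WVAG^n(a, α, μ, Σ)`:
`Ψ(θ) = -a Log(1 - i⟨α⋄μ,θ⟩ + ½‖θ‖²_{α⋄Σ}) - ∑ₖ βₖ Log(1 - i αₖ μₖ θₖ + ½ αₖ θₖ² Σₖₖ)`,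
where `βₖ = (1 - a αₖ)/αₖ`. -/
def Ψwvag {n : ℕ} (a : ℝ) (α μ : Fin n → ℝ) (S : Matrix (Fin n) (Fin n) ℝ)
    (θ : Fin n → ℝ) : ℂ :=
  -(a : ℂ) * Complex.log (1 - Complex.I * (dot (diaV α μ) θ : ℂ) +
      (quad (diaM α S) θ : ℂ) / 2) -
    ∑ k, (((1 - a * α k) / α k : ℝ) : ℂ) *
      Complex.log (1 - Complex.I * ((α k * μ k * θ k : ℝ) : ℂ) +
        ((α k * θ k ^ 2 * S k k : ℝ) : ℂ) / 2)

-- ### Auxiliary lemmas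

private lemma term_indicator (b c u v : ℝ) (C : ℝ) :
    (fun x : ℝ => ((Set.Ioo 0 b).indicator (fun _ => u) x) * C *
      ((Set.Ioo 0 c).indicator (fun _ => v) x))
    = (Set.Ioo 0 (min b c)).indicator (fun _ => u * C * v) := by
  funext x
  by_cases h1 : x ∈ Set.Ioo 0 b <;> by_cases h2 : x ∈ Set.Ioo 0 c <;>
    have hm : (x ∈ Set.Ioo 0 (min b c)) ↔ (x ∈ Set.Ioo 0 b ∧ x ∈ Set.Ioo 0 c) := by
      simp [Set.mem_Ioo, lt_min_iff]; tauto
  all_goals simp_all [Set.indicator_apply, hm]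

private lemma integral_ind (b C : ℝ) (hb : 0 ≤ b) :
    ∫ x : ℝ, (Set.Ioo 0 b).indicator (fun _ => C) x = b * C := by
  rw [MeasureTheory.integral_indicator_const _ measurableSet_Ioo]
  simp [Real.volume_Ioo, ENNReal.toReal_ofReal hb, smul_eq_mul, hb]

private lemma quad_diaM_nonneg {n : ℕ} (S : Matrix (Fin n) (Fin n) ℝ)
    (hq : ∀ x : Fin n → ℝ, 0 ≤ quad S x) (τ : Fin n → ℝ) (hτ : ∀ k, 0 ≤ τ k)
    (θ : Fin n → ℝ) : 0 ≤ quad (diaM τ S) θ := by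
  classical
  set F : Fin n → ℝ → ℝ := fun k => (Set.Ioo 0 (τ k)).indicator (fun _ => θ k) with hF
  have hint : ∀ k l : Fin n, Integrable (fun x => F k x * S k l * F l x) := by
    intro k l
    rw [hF, term_indicator]
    rw [integrable_indicator_iff measurableSet_Ioo]
    exact integrableOn_const (by simp [Real.volume_Ioo])
  have hterm : ∀ k l : Fin n,
      θ k * (diaM τ S) k l * θ l = ∫ x : ℝ, F k x * S k l * F l x := by
    intro k l
    rw [hF, term_indicator, integral_ind _ _ (le_min (hτ k) (hτ l))]
    simp [diaM]; ring
  have : quad (diaM τ S) θ = ∫ x : ℝ, quad S (fun k => F k x) := by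
    unfold quad
    rw [MeasureTheory.integral_finset_sum _
      (fun k _ => integrable_finset_sum _ (fun l _ => hint k l))]
    refine Finset.sum_congr rfl fun k _ => ?_
    rw [MeasureTheory.integral_finset_sum _ (fun l _ => hint k l)]
    exact Finset.sum_congr rfl fun l _ => hterm k l
  rw [this]
  exact MeasureTheory.integral_nonneg fun x => hq _

private lemma quad_diaM_ge' {n : ℕ} (S : Matrix (Fin n) (Fin n) ℝ)
    (hq : ∀ x : Fin n → ℝ, 0 ≤ quad S x) (α : Fin n → ℝ) (m : ℝ)
    (hm : 0 ≤ m) (hmα : ∀ k, m ≤ α k) (θ : Fin n → ℝ) :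
    m * quad S θ ≤ quad (diaM α S) θ := by
  have key : quad (diaM α S) θ =
      m * quad S θ + quad (diaM (fun k => α k - m) S) θ := by
    unfold quad diaM
    rw [Finset.mul_sum, ← Finset.sum_add_distrib]
    refine Finset.sum_congr rfl fun k _ => ?_
    rw [Finset.mul_sum, ← Finset.sum_add_distrib]
    refine Finset.sum_congr rfl fun l _ => ?_
    simp only [Matrix.of_apply]
    rw [show (min (α k) (α l)) = m + (min (α k - m) (α l - m)) by
      rw [min_sub_sub_right]; ring]
    ring
  rw [key]
  have := quad_diaM_nonneg S hq (fun k => α k - m) (fun k => sub_nonneg.mpr (hmα k)) θ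
  linarith

private lemma quad_eq_dot {n : ℕ} (S : Matrix (Fin n) (Fin n) ℝ) (x : Fin n → ℝ) :
    quad S x = dotProduct x (S.mulVec x) := by
  unfold quad dotProduct Matrix.mulVec dotProduct
  refine Finset.sum_congr rfl fun k _ => ?_
  rw [Finset.mul_sum]
  exact Finset.sum_congr rfl fun l _ => by ring

private lemma quad_pos' {n : ℕ} {S : Matrix (Fin n) (Fin n) ℝ} (hS : S.PosDef)
    {x : Fin n → ℝ} (hx : x ≠ 0) : 0 < quad S x := by
  rw [quad_eq_dot]
  simpa using hS.dotProduct_mulVec_pos hx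

private lemma quad_smul {n : ℕ} (S : Matrix (Fin n) (Fin n) ℝ) (r : ℝ) (x : Fin n → ℝ) :
    quad S (r • x) = r ^ 2 * quad S x := by
  unfold quad
  rw [Finset.mul_sum]
  refine Finset.sum_congr rfl fun k _ => ?_
  rw [Finset.mul_sum]
  refine Finset.sum_congr rfl fun l _ => ?_
  simp [Pi.smul_apply, smul_eq_mul]; ring

private lemma rayleigh' {n : ℕ} (hn : 2 ≤ n) {S : Matrix (Fin n) (Fin n) ℝ}
    (hS : S.PosDef) :
    ∃ c > 0, ∀ θ : Fin n → ℝ, c * ∑ k, θ k ^ 2 ≤ quad S θ := by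
  haveI : Nonempty (Fin n) := ⟨⟨0, by omega⟩⟩
  haveI : Nontrivial (Fin n → ℝ) := Function.nontrivial
  have hqc : Continuous fun θ : Fin n → ℝ => quad S θ := by
    unfold quad; fun_prop
  have hKc : IsCompact (Metric.sphere (0 : Fin n → ℝ) 1) := isCompact_sphere _ _
  have hKne : (Metric.sphere (0 : Fin n → ℝ) 1).Nonempty :=
    NormedSpace.sphere_nonempty.2 zero_le_one
  obtain ⟨u, huK, humin⟩ := hKc.exists_isMinOn hKne hqc.continuousOn
  have hu1 : ‖u‖ = 1 := by simpa using huK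
  have hu0 : u ≠ 0 := by intro h; rw [h] at hu1; simp at hu1
  have hc : 0 < quad S u := quad_pos' hS hu0
  refine ⟨quad S u / n, by positivity, fun θ => ?_⟩
  by_cases hθ : θ = 0
  · simp [hθ, quad]
  · have hr : (0:ℝ) < ‖θ‖ := norm_pos_iff.2 hθ
    have hmem : (‖θ‖⁻¹ • θ) ∈ Metric.sphere (0 : Fin n → ℝ) 1 := by
      simp [norm_smul, abs_of_pos (inv_pos.2 hr), inv_mul_cancel₀ hr.ne']
    have h1 : quad S u ≤ quad S (‖θ‖⁻¹ • θ) := humin hmem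
    have h2 : quad S (‖θ‖⁻¹ • θ) = (‖θ‖⁻¹) ^ 2 * quad S θ := quad_smul S _ θ
    have h3 : quad S u * ‖θ‖ ^ 2 ≤ quad S θ := by
      rw [h2] at h1
      have := mul_le_mul_of_nonneg_left h1 (sq_nonneg ‖θ‖)
      calc quad S u * ‖θ‖ ^ 2 = ‖θ‖ ^ 2 * quad S u := by ring
        _ ≤ ‖θ‖ ^ 2 * ((‖θ‖⁻¹) ^ 2 * quad S θ) := this
        _ = quad S θ := by field_simp
    have h4 : ∑ k, θ k ^ 2 ≤ (n : ℝ) * ‖θ‖ ^ 2 := by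
      calc ∑ k, θ k ^ 2 ≤ ∑ _k : Fin n, ‖θ‖ ^ 2 := by
            refine Finset.sum_le_sum fun k _ => ?_
            have hk := norm_le_pi_norm θ k
            have h0 : (0:ℝ) ≤ ‖θ k‖ := norm_nonneg _
            calc θ k ^ 2 = ‖θ k‖ ^ 2 := by rw [Real.norm_eq_abs, _root_.sq_abs]
              _ ≤ ‖θ‖ ^ 2 := by apply pow_le_pow_left₀ h0 hk
        _ = (n : ℝ) * ‖θ‖ ^ 2 := by
            simp [Finset.sum_const, Finset.card_univ, nsmul_eq_mul]
    calc quad S u / n * ∑ k, θ k ^ 2 ≤ quad S u / n * ((n:ℝ) * ‖θ‖ ^ 2) := by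
          apply mul_le_mul_of_nonneg_left h4 (by positivity)
      _ = quad S u * ‖θ‖ ^ 2 := by
          have hn0 : (n:ℝ) ≠ 0 := by positivity
          field_simp
      _ ≤ quad S θ := h3

private lemma onedim_integrable' {e p : ℝ} (he : 0 < e) (hp : 1/2 < p) :
    Integrable (fun x : ℝ => (1 + e * x ^ 2) ^ (-p)) := by
  have hbase : Integrable (fun x : ℝ => (1 + x ^ 2) ^ (-p)) := by
    have h := integrable_rpow_neg_one_add_norm_sq (E := ℝ) (μ := volume) (r := 2*p)
      (by simp; linarith)
    simpa [Real.norm_eq_abs, _root_.sq_abs, show -(2*p)/2 = -p by ring] using h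
  set c := min e 1 with hc
  have hc0 : 0 < c := lt_min he one_pos
  have hc1 : c ≤ 1 := min_le_right _ _
  refine (hbase.const_mul (c ^ (-p))).mono' ?_ (Filter.Eventually.of_forall fun x => ?_)
  · apply Continuous.aestronglyMeasurable
    exact Continuous.rpow_const (by fun_prop) (fun x => Or.inl (by positivity))
  · have h1 : c * (1 + x ^ 2) ≤ 1 + e * x ^ 2 := by
      have h3 : c * x^2 ≤ e * x^2 := mul_le_mul_of_nonneg_right (min_le_left _ _) (sq_nonneg x)
      nlinarith [sq_nonneg x]
    have h2 : (0:ℝ) < c * (1 + x^2) := by positivity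
    rw [Real.norm_eq_abs, _root_.abs_of_nonneg (Real.rpow_nonneg (by positivity) _)]
    calc (1 + e * x ^ 2) ^ (-p) ≤ (c * (1 + x ^ 2)) ^ (-p) :=
          Real.rpow_le_rpow_of_nonpos h2 h1 (by linarith)
      _ = c ^ (-p) * (1 + x ^ 2) ^ (-p) := Real.mul_rpow hc0.le (by positivity)

private lemma re_aux (x y : ℝ) : (1 - Complex.I * (x:ℂ) + (y:ℂ)/2).re = 1 + y/2 := by
  have h : (1 - Complex.I * (x:ℂ) + (y:ℂ)/2) = ((1+y/2 : ℝ):ℂ) + ((-x : ℝ):ℂ) * Complex.I := by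
    push_cast; ring
  rw [h]
  simp

private lemma quad_single {n : ℕ} (S : Matrix (Fin n) (Fin n) ℝ) (k : Fin n) :
    quad S (Pi.single k 1) = S k k := by
  unfold quad
  simp [Pi.single_apply, Finset.sum_ite_eq, ite_mul, mul_ite]

/-- Fourier invertibility of the `WVAG^n(a,α,μ,Σ)` distribution at time `t`:
if `(a/n + min_k β_k) t > 1/2`, then `θ ↦ exp(t Ψ(θ))` is Lebesgue integrable. -/
theorem stmt4 {n : ℕ} (hn : 2 ≤ n) (a : ℝ) (ha : 0 < a) (α : Fin n → ℝ)
    (hα : ∀ k, 0 < α k) (hsmall : ∀ k, a * α k < 1) (μ : Fin n → ℝ)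
    (S : Matrix (Fin n) (Fin n) ℝ) (hS : S.PosDef) (t : ℝ) (ht : 0 < t)
    (hcond : (a / n + ⨅ k, (1 - a * α k) / α k) * t > 1 / 2) :
    Integrable (fun θ : Fin n → ℝ => Complex.exp ((t : ℂ) * Ψwvag a α μ S θ)) := by
  haveI : Nonempty (Fin n) := ⟨⟨0, by omega⟩⟩
  have hn0 : (0:ℝ) < (n:ℝ) := by exact_mod_cast (by omega : 0 < n)
  -- the infimum β and its properties
  set β := (⨅ k, (1 - a * α k) / α k : ℝ) with hβdef
  have hβle : ∀ k, β ≤ (1 - a * α k) / α k := fun k =>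
    ciInf_le (Set.Finite.bddBelow (Set.finite_range _)) k
  have hβpos : 0 < β := by
    obtain ⟨k0, hk0⟩ := exists_eq_ciInf_of_finite (f := fun k => (1 - a * α k) / α k)
    rw [hβdef, ← hk0]
    exact div_pos (by linarith [hsmall k0]) (hα k0)
  -- the minimum m of α
  obtain ⟨m0, hm0⟩ := exists_eq_ciInf_of_finite (f := α)
  set m := (⨅ k, α k : ℝ) with hmdef
  have hmle : ∀ k, m ≤ α k := fun k =>
    ciInf_le (Set.Finite.bddBelow (Set.finite_range _)) k
  have hmpos : 0 < m := hm0 ▸ hα m0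
  -- Rayleigh constant
  obtain ⟨c0, hc0, hray⟩ := rayleigh' hn hS
  have hq : ∀ x : Fin n → ℝ, 0 ≤ quad S x := by
    intro x
    rcases eq_or_ne x 0 with h | h
    · simp [h, quad]
    · exact (quad_pos' hS h).le
  have hSkk : ∀ k, 0 < S k k := fun k => by
    have h1 : (Pi.single k 1 : Fin n → ℝ) ≠ 0 := by
      intro h
      have := congrFun h k
      simp at this
    have := quad_pos' hS h1
    rwa [quad_single] at this
  -- the per-coordinate constants
  set e : Fin n → ℝ := fun k => min (m * c0 / 2) (α k * S k k / 2) with hedef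
  have he : ∀ k, 0 < e k := fun k =>
    lt_min (by positivity) (by have := hα k; have := hSkk k; positivity)
  -- the exponent
  set p := t * (a / n + β) with hpdef
  have hp : 1/2 < p := by rw [hpdef, mul_comm]; exact hcond
  -- the dominating function is integrable
  have hg : Integrable (fun θ : Fin n → ℝ => ∏ k, (1 + e k * (θ k) ^ 2) ^ (-p)) :=
    Integrable.fintype_prod (𝕜 := ℝ) (f := fun k x => (1 + e k * x ^ 2) ^ (-p))
      (fun k => onedim_integrable' (he k) hp)
  -- measurability
  have hcont0 : Continuous fun θ : Fin n → ℝ =>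
      (1 : ℂ) - Complex.I * (dot (diaV α μ) θ : ℂ) + (quad (diaM α S) θ : ℂ) / 2 := by
    unfold dot diaV quad; fun_prop
  have hcontk : ∀ k : Fin n, Continuous fun θ : Fin n → ℝ =>
      (1 : ℂ) - Complex.I * ((α k * μ k * θ k : ℝ) : ℂ) +
        ((α k * θ k ^ 2 * S k k : ℝ) : ℂ) / 2 := by
    intro k; fun_prop
  have hmeasΨ : Measurable fun θ : Fin n → ℝ => Ψwvag a α μ S θ := by
    unfold Ψwvag
    apply Measurable.sub
    · exact (Complex.measurable_log.comp hcont0.measurable).const_mul _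
    · exact Finset.measurable_sum _ fun k _ =>
        (Complex.measurable_log.comp (hcontk k).measurable).const_mul _
  have hmeas : AEStronglyMeasurable
      (fun θ : Fin n → ℝ => Complex.exp ((t : ℂ) * Ψwvag a α μ S θ)) volume :=
    (Complex.measurable_exp.comp (hmeasΨ.const_mul _)).aestronglyMeasurable
  -- domination
  refine hg.mono' hmeas (Filter.Eventually.of_forall fun θ => ?_)
  -- notation
  set w0 : ℂ := 1 - Complex.I * (dot (diaV α μ) θ : ℂ) + (quad (diaM α S) θ : ℂ) / 2 with hw0
  set wk : Fin n → ℂ := fun k => 1 - Complex.I * ((α k * μ k * θ k : ℝ) : ℂ) +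
      ((α k * θ k ^ 2 * S k k : ℝ) : ℂ) / 2 with hwk
  set u : Fin n → ℝ := fun k => 1 + e k * θ k ^ 2 with hu
  have hupos : ∀ k, (0:ℝ) < u k := fun k => by
    have := he k; have := sq_nonneg (θ k); simp only [hu]; nlinarith
  have hu1 : ∀ k, (1:ℝ) ≤ u k := fun k => by
    have := he k; have := sq_nonneg (θ k); simp only [hu]; nlinarith
  -- lower bound for abs w0
  have hA0 : ∀ k, u k ≤ ‖w0‖ := by
    intro k
    have h1 : m * quad S θ ≤ quad (diaM α S) θ := quad_diaM_ge' S hq α m hmpos.le hmle θ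
    have h2 : c0 * ∑ j, θ j ^ 2 ≤ quad S θ := hray θ
    have h3 : θ k ^ 2 ≤ ∑ j, θ j ^ 2 :=
      Finset.single_le_sum (f := fun j => θ j ^ 2) (fun j _ => sq_nonneg _) (Finset.mem_univ k)
    have h4 : e k ≤ m * c0 / 2 := min_le_left _ _
    have h5 : (w0).re = 1 + quad (diaM α S) θ / 2 := by rw [hw0]; exact re_aux _ _
    have b1 : m * (c0 * ∑ j, θ j ^ 2) ≤ m * quad S θ := mul_le_mul_of_nonneg_left h2 hmpos.le
    have b2 : m * c0 * θ k ^ 2 ≤ m * c0 * ∑ j, θ j ^ 2 :=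
      mul_le_mul_of_nonneg_left h3 (by positivity)
    have b3 : e k * θ k ^ 2 ≤ m * c0 / 2 * θ k ^ 2 :=
      mul_le_mul_of_nonneg_right h4 (sq_nonneg _)
    have h6 : u k ≤ w0.re := by
      rw [h5, hu]
      simp only
      nlinarith [b1, b2, b3, h1]
    exact h6.trans (Complex.re_le_norm w0)
  -- lower bound for abs (wk k)
  have hAk : ∀ k, u k ≤ ‖wk k‖ := by
    intro k
    have h5 : (wk k).re = 1 + (α k * θ k ^ 2 * S k k) / 2 := by rw [hwk]; exact re_aux _ _
    have h4 : e k ≤ α k * S k k / 2 := min_le_right _ _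
    have b3 : e k * θ k ^ 2 ≤ α k * S k k / 2 * θ k ^ 2 :=
      mul_le_mul_of_nonneg_right h4 (sq_nonneg _)
    have h6 : u k ≤ (wk k).re := by
      rw [h5, hu]
      simp only
      nlinarith [b3]
    exact h6.trans (Complex.re_le_norm (wk k))
  -- the real part of the exponent
  have hre : ((t:ℂ) * Ψwvag a α μ S θ).re =
      t * (-(a * Real.log (‖w0‖)) -
        ∑ k, (1 - a * α k) / α k * Real.log (‖wk k‖)) := by
    rw [Complex.re_ofReal_mul]
    congr 1
    unfold Ψwvag
    rw [← hw0]
    simp only [neg_mul, Complex.sub_re, Complex.neg_re, Complex.re_sum,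
      Complex.re_ofReal_mul, Complex.log_re]
    rfl
  -- the key estimate
  have key : ∑ k, p * Real.log (u k) ≤
      t * (a * Real.log (‖w0‖)) +
        ∑ k, t * ((1 - a * α k) / α k * Real.log (‖wk k‖)) := by
    have h0 : t * (a * Real.log (‖w0‖)) =
        ∑ _k : Fin n, t * a / n * Real.log (‖w0‖) := by
      rw [Finset.sum_const, Finset.card_univ, Fintype.card_fin, nsmul_eq_mul]
      field_simp
    rw [h0, ← Finset.sum_add_distrib]
    refine Finset.sum_le_sum fun k _ => ?_
    have e1 : Real.log (u k) ≤ Real.log (‖w0‖) := Real.log_le_log (hupos k) (hA0 k)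
    have e2 : Real.log (u k) ≤ Real.log (‖wk k‖) := Real.log_le_log (hupos k) (hAk k)
    have e3 : 0 ≤ Real.log (u k) := Real.log_nonneg (hu1 k)
    have e4 : t * β ≤ t * ((1 - a * α k) / α k) := mul_le_mul_of_nonneg_left (hβle k) ht.le
    have e5 : 0 ≤ t * β := by positivity
    have hsplit : p * Real.log (u k) =
        t * a / n * Real.log (u k) + t * β * Real.log (u k) := by
      rw [hpdef]; ring
    rw [hsplit]
    have i1 : t * a / n * Real.log (u k) ≤ t * a / n * Real.log (‖w0‖) :=
      mul_le_mul_of_nonneg_left e1 (by positivity)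
    have i2 : t * β * Real.log (u k) ≤
        t * ((1 - a * α k) / α k) * Real.log (‖wk k‖) :=
      mul_le_mul e4 e2 e3 (e5.trans e4)
    calc t * a / n * Real.log (u k) + t * β * Real.log (u k)
        ≤ t * a / n * Real.log (‖w0‖) +
          t * ((1 - a * α k) / α k) * Real.log (‖wk k‖) := add_le_add i1 i2
      _ = t * a / n * Real.log (‖w0‖) +
          t * ((1 - a * α k) / α k * Real.log (‖wk k‖)) := by ring
  -- put everything together
  have hnorm : ‖Complex.exp ((t:ℂ) * Ψwvag a α μ S θ)‖ =
      Real.exp (((t:ℂ) * Ψwvag a α μ S θ).re) := by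
    rw [Complex.norm_exp]
  rw [hnorm]
  calc Real.exp (((t:ℂ) * Ψwvag a α μ S θ).re)
      ≤ Real.exp (∑ k, -p * Real.log (u k)) := by
        apply Real.exp_le_exp.mpr
        rw [hre, mul_sub, mul_neg, Finset.mul_sum]
        have hs : ∑ k, -p * Real.log (u k) = -(∑ k, p * Real.log (u k)) := by
          rw [← Finset.sum_neg_distrib]
          exact Finset.sum_congr rfl fun k _ => by ring
        rw [hs]
        linarith [key]
    _ = ∏ k, u k ^ (-p) := by
        rw [Real.exp_sum]
        exact Finset.prod_congr rfl fun k _ => by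
          rw [Real.rpow_def_of_pos (hupos k), mul_comm]
    _ = ∏ k, (1 + e k * θ k ^ 2) ^ (-p) := rfl
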